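/- (u^k lower bound from rank) Let p be a prime, ω = e^{2πi/p}, and P : F_p^n → F_p a polynomial of degree k whose degree-k homogeneous part P_k can be written as a function of s polynomials Q_1,…,Q_s each of degree less than k (e.g. s = 2·rank(P), with P_k = Σ R_i S_i). Then max over polynomials Q of degree < k of |E_x[ω^{P(x) − Q(x)}]| ≥ p^{-s}. -/

import Mathlib

/-- The standard additive character `t ↦ e^{2πi·t/p}` of `ZMod p`. -/
noncomputable def stdChar (p : ℕ) (t : ZMod p) : ℂ :=
  Complex.exp (2 * Real.pi * Complex.I * (t.val : ℂ) / p)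

lemma stdChar_eq {p : ℕ} [NeZero p] (t : ZMod p) : stdChar p t = ZMod.stdAddChar t := by
  rw [ZMod.stdAddChar_apply, ZMod.toCircle_apply, stdChar]

lemma addChar_map_sum {p : ℕ} [NeZero p] {ι : Type*} (ψ : AddChar (ZMod p) ℂ)
    (t : Finset ι) (f : ι → ZMod p) : ψ (∑ i ∈ t, f i) = ∏ i ∈ t, ψ (f i) := by
  induction t using Finset.cons_induction with
  | empty => simp
  | cons a t ha ih => rw [Finset.sum_cons, Finset.prod_cons, AddChar.map_add_eq_mul, ih]

/-- `u^k` lower bound from rank: let `p` be prime, `ω = e^{2πi/p}`, and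
`P : F_p^n → F_p` a polynomial of degree (at most) `k` whose degree-`k` homogeneous part
can be written as a function `g` of `s` polynomials `Q_1,…,Q_s`, each of degree `< k`.
Then the maximum over polynomials `R` of degree `< k` of `|E_x[ω^{P(x)−R(x)}]|` is at
least `p^{−s}` (stated as: some such `R` achieves it). -/
theorem stmt19 {p : ℕ} [Fact (Nat.Prime p)] {n k s : ℕ} (hk : 0 < k)
    (P : MvPolynomial (Fin n) (ZMod p)) (hP : P.totalDegree ≤ k)
    (Q : Fin s → MvPolynomial (Fin n) (ZMod p))
    (hQ : ∀ i, (Q i).totalDegree < k)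
    (g : (Fin s → ZMod p) → ZMod p)
    (hg : ∀ x : Fin n → ZMod p,
      MvPolynomial.eval x (MvPolynomial.homogeneousComponent k P)
        = g (fun i => MvPolynomial.eval x (Q i))) :
    ∃ R : MvPolynomial (Fin n) (ZMod p), R.totalDegree < k ∧
      (p : ℝ) ^ (-(s : ℤ)) ≤
        ‖(∑ x : Fin n → ZMod p,
            stdChar p (MvPolynomial.eval x P - MvPolynomial.eval x R))
          / Fintype.card (Fin n → ZMod p)‖ := by
  classical
  have hp : p.Prime := Fact.out
  haveI : NeZero p := ⟨hp.ne_zero⟩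
  have hp0 : (0:ℝ) < (p:ℝ) := by exact_mod_cast hp.pos
  set ψ := ZMod.stdAddChar (N := p) with hψdef
  have habs : ∀ t : ZMod p, ‖ψ t‖ = 1 := fun t => by
    rw [hψdef, ZMod.stdAddChar_apply]; exact Circle.norm_coe _
  have hbot : (⊥ : ℕ) < k := hk
  -- decomposition of P
  set Pk := MvPolynomial.homogeneousComponent k P with hPkdef
  set P0 := ∑ i ∈ Finset.range k, MvPolynomial.homogeneousComponent i P with hP0def
  have hsub : Finset.range (P.totalDegree + 1) ⊆ Finset.range (k + 1) :=
    Finset.range_subset_range.2 (by omega)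
  have hsplit : P0 + Pk = P := by
    have hz : ∑ i ∈ Finset.range (k + 1), MvPolynomial.homogeneousComponent i P
        = ∑ i ∈ Finset.range (P.totalDegree + 1), MvPolynomial.homogeneousComponent i P := by
      refine (Finset.sum_subset hsub ?_).symm
      intro i hi hni
      simp only [Finset.mem_range] at hi hni
      exact MvPolynomial.homogeneousComponent_eq_zero _ _ (by omega)
    rw [hP0def, hPkdef, ← Finset.sum_range_succ, hz,
      MvPolynomial.sum_homogeneousComponent]
  have hP0deg : P0.totalDegree < k := by
    refine lt_of_le_of_lt (MvPolynomial.totalDegree_finset_sum _ _) ?_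
    rw [Finset.sup_lt_iff hbot]
    intro i hi
    exact lt_of_le_of_lt
      (MvPolynomial.homogeneousComponent_isHomogeneous i P).totalDegree_le
      (Finset.mem_range.mp hi)
  set F : (Fin n → ZMod p) → (Fin s → ZMod p) :=
    fun x i => MvPolynomial.eval x (Q i) with hFdef
  set R : (Fin s → ZMod p) → MvPolynomial (Fin n) (ZMod p) :=
    fun j => P0 + ∑ i, MvPolynomial.C (j i) * Q i with hRdef
  have hRdeg : ∀ j, (R j).totalDegree < k := by
    intro j
    refine lt_of_le_of_lt (MvPolynomial.totalDegree_add _ _) (max_lt hP0deg ?_)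
    refine lt_of_le_of_lt (MvPolynomial.totalDegree_finset_sum _ _) ?_
    rw [Finset.sup_lt_iff hbot]
    intro i _
    refine lt_of_le_of_lt (MvPolynomial.totalDegree_mul _ _) ?_
    simpa [MvPolynomial.totalDegree_C] using hQ i
  have hEval : ∀ j x, MvPolynomial.eval x P - MvPolynomial.eval x (R j)
      = g (F x) - ∑ i, j i * F x i := by
    intro j x
    have h1 : MvPolynomial.eval x P = MvPolynomial.eval x P0 + g (F x) := by
      conv_lhs => rw [← hsplit]
      rw [map_add, hg x]
    rw [h1, hRdef]
    simp only [map_add, map_sum, map_mul, MvPolynomial.eval_C, hFdef]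
    ring
  -- fiber counting
  set c : (Fin s → ZMod p) → ℕ :=
    fun y => (Finset.univ.filter fun x => F x = y).card with hcdef
  have hcsum : ∑ y, c y = p ^ n := by
    rw [hcdef, ← Finset.card_eq_sum_card_fiberwise (fun x _ => Finset.mem_univ (F x))]
    simp [Finset.card_univ, Fintype.card_fun, ZMod.card]
  obtain ⟨y₀, -, hy₀⟩ := Finset.exists_max_image Finset.univ c
    ⟨fun _ => 0, Finset.mem_univ _⟩
  have hy₀' : p ^ n ≤ p ^ s * c y₀ := by
    calc p ^ n = ∑ y, c y := hcsum.symm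
      _ ≤ Finset.univ.card • c y₀ :=
          Finset.sum_le_card_nsmul _ _ _ (fun y _ => hy₀ y (Finset.mem_univ y))
      _ = p ^ s * c y₀ := by
          simp [Finset.card_univ, Fintype.card_fun, ZMod.card, smul_eq_mul]
  -- the exponential sums
  set S : (Fin s → ZMod p) → ℂ :=
    fun j => ∑ x, ψ (MvPolynomial.eval x P - MvPolynomial.eval x (R j)) with hSdef
  have key : ∑ j : Fin s → ZMod p, ψ (∑ i, j i * y₀ i) * S j
      = (p:ℂ) ^ s * ψ (g y₀) * c y₀ := by
    have step1 : ∀ (j : Fin s → ZMod p) x, ψ (∑ i, j i * y₀ i)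
        * ψ (MvPolynomial.eval x P - MvPolynomial.eval x (R j))
        = ψ (g (F x)) * ∏ i, ψ (j i * (y₀ i - F x i)) := by
      intro j x
      rw [hEval j x, ← AddChar.map_add_eq_mul]
      have h2 : (∑ i, j i * y₀ i) + (g (F x) - ∑ i, j i * F x i)
          = g (F x) + ∑ i, j i * (y₀ i - F x i) := by
        simp only [mul_sub]
        rw [Finset.sum_sub_distrib]
        ring
      rw [h2, AddChar.map_add_eq_mul, addChar_map_sum]
    calc ∑ j : Fin s → ZMod p, ψ (∑ i, j i * y₀ i) * S j
        = ∑ j : Fin s → ZMod p, ∑ x, ψ (g (F x)) * ∏ i, ψ (j i * (y₀ i - F x i)) := by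
          refine Finset.sum_congr rfl fun j _ => ?_
          rw [hSdef, Finset.mul_sum]
          exact Finset.sum_congr rfl fun x _ => step1 j x
      _ = ∑ x, ψ (g (F x)) * ∑ j : Fin s → ZMod p, ∏ i, ψ (j i * (y₀ i - F x i)) := by
          rw [Finset.sum_comm]
          exact Finset.sum_congr rfl fun x _ => (Finset.mul_sum _ _ _).symm
      _ = ∑ x, ψ (g (F x)) * ∏ i, ∑ t : ZMod p, ψ (t * (y₀ i - F x i)) := by
          refine Finset.sum_congr rfl fun x _ => ?_
          congr 1
          exact (Fintype.prod_sum fun i t => ψ (t * (y₀ i - F x i))).symm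
      _ = ∑ x, ψ (g (F x)) * (if F x = y₀ then ((p:ℂ) ^ s) else 0) := by
          refine Finset.sum_congr rfl fun x _ => ?_
          congr 1
          have h3 : ∀ i, ∑ t : ZMod p, ψ (t * (y₀ i - F x i))
              = if y₀ i - F x i = 0 then (p:ℂ) else 0 := fun i => by
            rw [hψdef, AddChar.sum_mulShift _ (ZMod.isPrimitive_stdAddChar p)]
            simp [ZMod.card]
          simp only [h3]
          by_cases h : F x = y₀
          · simp [h, Finset.prod_const, Finset.card_univ]
          · obtain ⟨i, hi⟩ := Function.ne_iff.mp h
            rw [if_neg h, Finset.prod_eq_zero (Finset.mem_univ i)]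
            rw [if_neg]
            intro hc0
            exact hi (sub_eq_zero.mp hc0).symm
      _ = (p:ℂ) ^ s * ψ (g y₀) * c y₀ := by
          simp only [mul_ite, mul_zero]
          rw [← Finset.sum_filter]
          rw [Finset.sum_congr rfl (fun x hx => by
            rw [(Finset.mem_filter.mp hx).2])]
          rw [Finset.sum_const]
          have : (Finset.univ.filter fun x => F x = y₀).card = c y₀ := by rw [hcdef]
          rw [this, nsmul_eq_mul]
          ring
  -- from the key identity to the bound
  have hsum_bound : (p:ℝ) ^ n ≤ ∑ j : Fin s → ZMod p, ‖S j‖ := by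
    calc (p:ℝ) ^ n ≤ (p:ℝ) ^ s * c y₀ := by exact_mod_cast hy₀'
      _ = ‖(p:ℂ) ^ s * ψ (g y₀) * c y₀‖ := by
          rw [norm_mul, norm_mul, habs]
          rw [show (((c y₀ : ℕ) : ℂ)) = ((c y₀ : ℝ) : ℂ) by push_cast; ring]
          rw [show ((p:ℂ) ^ s) = (((p:ℝ) ^ s : ℝ) : ℂ) by push_cast; ring]
          rw [Complex.norm_real, Complex.norm_real, Real.norm_eq_abs, Real.norm_eq_abs]
          rw [abs_of_nonneg (by positivity), abs_of_nonneg (by positivity)]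
          ring
      _ = ‖∑ j : Fin s → ZMod p, ψ (∑ i, j i * y₀ i) * S j‖ := by rw [key]
      _ ≤ ∑ j : Fin s → ZMod p, ‖ψ (∑ i, j i * y₀ i) * S j‖ :=
          norm_sum_le _ _
      _ = ∑ j : Fin s → ZMod p, ‖S j‖ := by
          refine Finset.sum_congr rfl fun j _ => ?_
          rw [norm_mul, habs, one_mul]
  have hcards : ((Finset.univ : Finset (Fin s → ZMod p)).card : ℝ) = (p:ℝ) ^ s := by
    simp [Finset.card_univ, Fintype.card_fun, ZMod.card]
  obtain ⟨j, -, hj⟩ := Finset.exists_le_of_sum_le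
    (Finset.univ_nonempty (α := Fin s → ZMod p))
    (show ∑ _j : Fin s → ZMod p, (p:ℝ) ^ n / (p:ℝ) ^ s
        ≤ ∑ j : Fin s → ZMod p, ‖S j‖ by
      rw [Finset.sum_const, nsmul_eq_mul, hcards, mul_div_cancel₀ _ (by positivity)]
      exact hsum_bound)
  refine ⟨R j, hRdeg j, ?_⟩
  have hSj : (∑ x : Fin n → ZMod p,
      stdChar p (MvPolynomial.eval x P - MvPolynomial.eval x (R j))) = S j := by
    rw [hSdef]
    exact Finset.sum_congr rfl fun x _ => stdChar_eq _
  have hcard2 : ((Fintype.card (Fin n → ZMod p) : ℕ) : ℝ) = (p:ℝ) ^ n := by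
    simp [Fintype.card_fun, ZMod.card]
  rw [hSj, norm_div, Complex.norm_natCast, hcard2]
  rw [zpow_neg, zpow_natCast, inv_eq_one_div,
    div_le_div_iff₀ (by positivity) (by positivity), one_mul]
  calc (p:ℝ) ^ n = ((p:ℝ) ^ n / (p:ℝ) ^ s) * (p:ℝ) ^ s := by field_simp
    _ ≤ ‖S j‖ * (p:ℝ) ^ s :=
        mul_le_mul_of_nonneg_right hj (by positivity)
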